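/- Let λ_θ, λ_c satisfy 0 < λ_c < λ_θ < 1, set θ(n) = n^{−λ_θ/16}, δ(n) = S(θ(n))·n^{λ_c/8} with S(θ) = h₂(sin²θ), and m(n) = n(S(θ(n)) + δ(n)). Then m(n) ∼ (λ_θ/8) n^{k'} log₂ n as n → ∞ with k' = 1 − (λ_θ − λ_c)/8 ∈ (7/8, 1) when λ_θ ∈ (0,1); in particular m(n)/n → 0 and n > m(n) for large n. -/

import Mathlib

open Filter Real Set Topology

/-- Binary entropy with logarithm base 2. -/
noncomputable def binEnt2 (p : ℝ) : ℝ :=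
  -p * Real.logb 2 p - (1 - p) * Real.logb 2 (1 - p)

lemma sin_div_lim : Tendsto (fun x : ℝ => Real.sin x / x) (𝓝[≠] (0:ℝ)) (𝓝 1) := by
  have h : HasDerivAt Real.sin 1 0 := by simpa using Real.hasDerivAt_sin 0
  have := hasDerivAt_iff_tendsto_slope.mp h
  refine this.congr' ?_
  filter_upwards [self_mem_nhdsWithin] with x hx
  simp [slope_def_field, Real.sin_zero]

lemma log_one_sub_lim : Tendsto (fun x : ℝ => Real.log (1 - x) / x) (𝓝[≠] (0:ℝ)) (𝓝 (-1)) := by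
  have h1 : HasDerivAt (fun x : ℝ => 1 - x) (-1) 0 := by
    simpa using (hasDerivAt_id (0:ℝ)).const_sub 1
  have h : HasDerivAt (fun x : ℝ => Real.log (1 - x)) (-1) 0 := by
    simpa using h1.log (by norm_num)
  have := hasDerivAt_iff_tendsto_slope.mp h
  refine this.congr' ?_
  filter_upwards [self_mem_nhdsWithin] with x hx
  simp [slope_def_field]

lemma entropy_ratio_lim :
    Tendsto (fun p : ℝ => binEnt2 p / (-p * Real.logb 2 p)) (𝓝[Set.Ioo (0:ℝ) 1] 0) (𝓝 1) := by
  have hsub : Set.Ioo (0:ℝ) 1 ⊆ {x : ℝ | x ≠ 0} := fun x hx => ne_of_gt hx.1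
  have hlog1 : Tendsto (fun x : ℝ => Real.log (1 - x) / x) (𝓝[Set.Ioo (0:ℝ) 1] 0) (𝓝 (-1)) :=
    log_one_sub_lim.mono_left (nhdsWithin_mono _ hsub)
  have hlogbot : Tendsto Real.log (𝓝[Set.Ioo (0:ℝ) 1] 0) atBot :=
    Real.tendsto_log_nhdsGT_zero.mono_left (nhdsWithin_mono _ fun x hx => hx.1)
  have hloginv : Tendsto (fun p : ℝ => (Real.log p)⁻¹) (𝓝[Set.Ioo (0:ℝ) 1] 0) (𝓝 0) := by
    have h1 : Tendsto (fun p : ℝ => -Real.log p) (𝓝[Set.Ioo (0:ℝ) 1] 0) atTop :=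
      tendsto_neg_atBot_atTop.comp hlogbot
    have h3 : Tendsto (fun p : ℝ => -(-Real.log p)⁻¹) (𝓝[Set.Ioo (0:ℝ) 1] 0) (𝓝 (-0)) :=
      h1.inv_tendsto_atTop.neg
    simpa [inv_neg] using h3
  have honesub : Tendsto (fun p : ℝ => 1 - p) (𝓝[Set.Ioo (0:ℝ) 1] 0) (𝓝 1) := by
    have : Tendsto (fun p : ℝ => 1 - p) (𝓝 (0:ℝ)) (𝓝 1) := by
      simpa using (tendsto_const_nhds.sub tendsto_id : Tendsto (fun p : ℝ => 1 - p) (𝓝 0) (𝓝 (1-0)))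
    exact this.mono_left nhdsWithin_le_nhds
  have hg : Tendsto (fun p : ℝ => (1 - p) * (Real.log (1 - p) / p) * (Real.log p)⁻¹)
      (𝓝[Set.Ioo (0:ℝ) 1] 0) (𝓝 0) := by
    have := (honesub.mul hlog1).mul hloginv
    simpa using this
  have key : Tendsto (fun p : ℝ => 1 + (1 - p) * (Real.log (1 - p) / p) * (Real.log p)⁻¹)
      (𝓝[Set.Ioo (0:ℝ) 1] 0) (𝓝 1) := by
    simpa using hg.const_add 1
  refine key.congr' ?_
  filter_upwards [self_mem_nhdsWithin] with p hp
  have hp0 : p ≠ 0 := ne_of_gt hp.1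
  have hlogp : Real.log p ≠ 0 := ne_of_lt (Real.log_neg hp.1 hp.2)
  have hlog2 : Real.log 2 ≠ 0 := ne_of_gt (Real.log_pos one_lt_two)
  simp only [binEnt2, Real.logb]
  field_simp
  ring

/-- Asymptotics of singlet consumption in the diluted protocol (Corollary 3):
with `θ(n) = n^{−λ_θ/16}`, `S(θ) = h₂(sin²θ)`, `δ(n) = S(θ(n))·n^{λ_c/8}` and
`m(n) = n(S(θ(n)) + δ(n))`, one has `m(n) ∼ (λ_θ/8)·n^{k'}·log₂ n` with
`k' = 1 − (λ_θ − λ_c)/8 ∈ (7/8, 1)`; in particular `m(n)/n → 0` and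
`m(n) < n` for all large `n`. -/
theorem diluted_singlet_consumption (lθ lc : ℝ)
    (hlc0 : 0 < lc) (hlclθ : lc < lθ) (hlθ1 : lθ < 1) :
    let S : ℕ → ℝ := fun n => binEnt2 (Real.sin ((n : ℝ) ^ (-(lθ / 16))) ^ 2)
    let m : ℕ → ℝ := fun n => (n : ℝ) * (S n + S n * (n : ℝ) ^ (lc / 8))
    let k' : ℝ := 1 - (lθ - lc) / 8
    (7 / 8 < k' ∧ k' < 1) ∧
    Tendsto (fun n : ℕ => m n / ((lθ / 8) * (n : ℝ) ^ k' * Real.logb 2 (n : ℝ)))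
      atTop (nhds 1) ∧
    Tendsto (fun n : ℕ => m n / (n : ℝ)) atTop (nhds 0) ∧
    ∀ᶠ n : ℕ in atTop, m n < (n : ℝ) := by
  intro S m k'
  have ha : (0:ℝ) < lθ/8 := by linarith
  have hc : (0:ℝ) < lc/8 := by linarith
  have hk'def : k' = 1 - (lθ - lc) / 8 := rfl
  set t : ℕ → ℝ := fun n => (n:ℝ) ^ (-(lθ/16)) with htdef
  set p : ℕ → ℝ := fun n => Real.sin (t n) ^ 2 with hpdef
  set B : ℕ → ℝ := fun n => (Real.sin (t n) / t n) ^ 2 with hBdef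
  set L : ℕ → ℝ := fun n => Real.logb 2 (n:ℝ) with hLdef
  have hS : ∀ n, S n = binEnt2 (p n) := fun n => rfl
  have hm : ∀ n, m n = (n:ℝ) * (binEnt2 (p n) * (1 + (n:ℝ) ^ (lc/8))) := by
    intro n; show (n:ℝ) * (S n + S n * (n:ℝ) ^ (lc/8)) = _
    rw [hS]; ring
  -- basic limits
  have htt : Tendsto t atTop (𝓝 0) :=
    (tendsto_rpow_neg_atTop (by linarith : (0:ℝ) < lθ/16)).comp tendsto_natCast_atTop_atTop
  have ht_pos : ∀ᶠ n : ℕ in atTop, 0 < t n := by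
    filter_upwards [eventually_ge_atTop 1] with n hn
    exact Real.rpow_pos_of_pos (by exact_mod_cast Nat.lt_of_lt_of_le Nat.zero_lt_one hn) _
  have ht_small : ∀ᶠ n : ℕ in atTop, t n < 1/2 := htt.eventually_lt_const (by norm_num)
  -- bundle of eventual facts
  have hEv : ∀ᶠ n : ℕ in atTop,
      2 ≤ n ∧ 0 < t n ∧ t n < 1/2 ∧ p n ∈ Set.Ioo (0:ℝ) 1 ∧ 0 < B n ∧ 0 < L n := by
    filter_upwards [eventually_ge_atTop 2, ht_pos, ht_small] with n hn2 htp hts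
    have hsinpos : 0 < Real.sin (t n) :=
      Real.sin_pos_of_pos_of_lt_pi htp (by linarith [Real.pi_gt_three])
    have hsinlt : Real.sin (t n) < 1 := by
      have := Real.sin_lt htp
      linarith
    have hn1 : (1:ℝ) < (n:ℝ) := by exact_mod_cast Nat.lt_of_lt_of_le Nat.one_lt_two hn2
    refine ⟨hn2, htp, hts, ⟨pow_pos hsinpos 2, ?_⟩, pow_pos (div_pos hsinpos htp) 2,
      Real.logb_pos one_lt_two hn1⟩
    exact pow_lt_one₀ (le_of_lt hsinpos) hsinlt two_ne_zero
  -- limit A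
  have hptend : Tendsto p atTop (𝓝 0) := by
    have h1 : Tendsto (fun n => Real.sin (t n)) atTop (𝓝 0) := by
      have := (Real.continuous_sin.tendsto 0).comp htt
      simpa [Function.comp_def] using this
    have := h1.pow 2
    simpa using this
  have hA : Tendsto (fun n => binEnt2 (p n) / (-(p n) * Real.logb 2 (p n))) atTop (𝓝 1) := by
    have hmem : ∀ᶠ n : ℕ in atTop, p n ∈ Set.Ioo (0:ℝ) 1 := hEv.mono fun n h => h.2.2.2.1
    exact entropy_ratio_lim.comp (tendsto_nhdsWithin_iff.mpr ⟨hptend, hmem⟩)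
  -- limit B
  have hB : Tendsto B atTop (𝓝 1) := by
    have ht' : Tendsto t atTop (𝓝[≠] (0:ℝ)) :=
      tendsto_nhdsWithin_iff.mpr ⟨htt, ht_pos.mono fun n h => ne_of_gt h⟩
    have := (sin_div_lim.comp ht').pow 2
    simpa using this
  -- useful identities on the bundle
  have hts2 : ∀ n : ℕ, 0 < (n:ℝ) → t n ^ 2 = (n:ℝ) ^ (-(lθ/8)) := by
    intro n hn0
    rw [pow_two, htdef]
    rw [← Real.rpow_add hn0]
    congr 1; ring
  have hpt : ∀ n : ℕ, t n ≠ 0 → p n = B n * t n ^ 2 := by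
    intro n ht0
    rw [hpdef, hBdef]
    field_simp
  have hlogp_eq : ∀ n : ℕ, 0 < (n:ℝ) → 0 < t n → 0 < B n →
      Real.logb 2 (p n) = Real.logb 2 (B n) + (-(lθ/8)) * L n := by
    intro n hn0 ht0 hB0
    rw [hpt n (ne_of_gt ht0), Real.logb_mul (ne_of_gt hB0) (by positivity), hts2 n hn0,
      Real.logb_rpow_eq_mul_logb_of_pos hn0]
  -- limit C
  have haL : Tendsto (fun n : ℕ => lθ/8 * L n) atTop atTop := by
    have := (Real.tendsto_logb_atTop one_lt_two).comp tendsto_natCast_atTop_atTop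
    exact this.const_mul_atTop ha
  have hC : Tendsto (fun n => (-(Real.logb 2 (p n))) / (lθ/8 * L n)) atTop (𝓝 1) := by
    have hlogB0 : Tendsto (fun n => Real.logb 2 (B n)) atTop (𝓝 0) := by
      have h1 := (Real.continuousAt_log one_ne_zero).tendsto.comp hB
      have h2 := h1.div_const (Real.log 2)
      have h3 : Tendsto (fun n => Real.log (B n) / Real.log 2) atTop (𝓝 0) := by
        simpa [Real.log_one] using h2
      simpa [Real.logb] using h3
    have hfrac : Tendsto (fun n => Real.logb 2 (B n) * (lθ/8 * L n)⁻¹) atTop (𝓝 0) := by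
      simpa using hlogB0.mul haL.inv_tendsto_atTop
    have key : Tendsto (fun n => 1 - Real.logb 2 (B n) * (lθ/8 * L n)⁻¹) atTop (𝓝 1) := by
      simpa using hfrac.const_sub 1
    refine key.congr' ?_
    filter_upwards [hEv] with n hn
    obtain ⟨hn2, ht0, -, -, hB0, hL0⟩ := hn
    have hn0 : (0:ℝ) < (n:ℝ) := by exact_mod_cast Nat.lt_of_lt_of_le Nat.zero_lt_two hn2
    have haL0 : lθ/8 * L n ≠ 0 := ne_of_gt (mul_pos ha hL0)
    have hLne : L n ≠ 0 := ne_of_gt hL0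
    have hlθne : lθ ≠ 0 := ne_of_gt (by linarith : (0:ℝ) < lθ)
    rw [hlogp_eq n hn0 ht0 hB0]
    field_simp
    ring
  -- limit G
  have hG : Tendsto (fun n : ℕ => (1 + (n:ℝ) ^ (lc/8)) / (n:ℝ) ^ (lc/8)) atTop (𝓝 1) := by
    have h0 : Tendsto (fun n : ℕ => (n:ℝ) ^ (-(lc/8))) atTop (𝓝 0) :=
      (tendsto_rpow_neg_atTop hc).comp tendsto_natCast_atTop_atTop
    have key : Tendsto (fun n : ℕ => (n:ℝ) ^ (-(lc/8)) + 1) atTop (𝓝 1) := by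
      simpa using h0.add_const 1
    refine key.congr' ?_
    filter_upwards [eventually_ge_atTop 1] with n hn
    have hn0 : (0:ℝ) < (n:ℝ) := by exact_mod_cast Nat.lt_of_lt_of_le Nat.zero_lt_one hn
    have hx : (n:ℝ) ^ (lc/8) ≠ 0 := ne_of_gt (Real.rpow_pos_of_pos hn0 _)
    rw [Real.rpow_neg (le_of_lt hn0)]
    field_simp
  -- main asymptotic equivalence
  have hMain : Tendsto (fun n : ℕ => m n / ((lθ/8) * (n:ℝ) ^ k' * L n)) atTop (𝓝 1) := by
    have hprod := ((hA.mul hB).mul hC).mul hG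
    have hprod1 : Tendsto (fun n : ℕ =>
        (binEnt2 (p n) / (-(p n) * Real.logb 2 (p n))) * B n *
          ((-(Real.logb 2 (p n))) / (lθ/8 * L n)) *
          ((1 + (n:ℝ) ^ (lc/8)) / (n:ℝ) ^ (lc/8))) atTop (𝓝 1) := by
      simpa using hprod
    refine hprod1.congr' ?_
    filter_upwards [hEv] with n hn
    obtain ⟨hn2, ht0, -, hpmem, hB0, hL0⟩ := hn
    have hn0 : (0:ℝ) < (n:ℝ) := by exact_mod_cast Nat.lt_of_lt_of_le Nat.zero_lt_two hn2
    have hp0 : p n ≠ 0 := ne_of_gt hpmem.1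
    have hlogpne : Real.logb 2 (p n) ≠ 0 :=
      ne_of_lt (Real.logb_neg one_lt_two hpmem.1 hpmem.2)
    have hLne : L n ≠ 0 := ne_of_gt hL0
    have hxne : (n:ℝ) ^ (lc/8) ≠ 0 := ne_of_gt (Real.rpow_pos_of_pos hn0 _)
    have htne : t n ≠ 0 := ne_of_gt ht0
    have hk : (n:ℝ) ^ k' = (n:ℝ) * t n ^ 2 * (n:ℝ) ^ (lc/8) := by
      have h1 : (n:ℝ) ^ k' = (n:ℝ) ^ ((1:ℝ) + (-(lθ/8)) + lc/8) := by
        congr 1; rw [hk'def]; ring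
      rw [h1, Real.rpow_add hn0, Real.rpow_add hn0, Real.rpow_one, hts2 n hn0]
    have hBne : B n ≠ 0 := ne_of_gt hB0
    have hlθne : lθ ≠ 0 := ne_of_gt (by linarith : (0:ℝ) < lθ)
    have hp0' : B n * t n ^ 2 ≠ 0 := by rw [← hpt n htne]; exact hp0
    have hlog' : Real.logb 2 (B n * t n ^ 2) ≠ 0 := by rw [← hpt n htne]; exact hlogpne
    have e1 : m n / ((lθ/8) * (n:ℝ) ^ k' * L n) =
        binEnt2 (p n) * (1 + (n:ℝ) ^ (lc/8)) / (t n ^ 2 * (lθ/8 * L n) * (n:ℝ) ^ (lc/8)) := by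
      rw [hm n, hk]
      field_simp
    have e2 : binEnt2 (p n) / (-(p n) * Real.logb 2 (p n)) * B n *
        ((-(Real.logb 2 (p n))) / (lθ/8 * L n)) * ((1 + (n:ℝ) ^ (lc/8)) / (n:ℝ) ^ (lc/8)) =
        binEnt2 (p n) * (1 + (n:ℝ) ^ (lc/8)) / (t n ^ 2 * (lθ/8 * L n) * (n:ℝ) ^ (lc/8)) := by
      rw [hpt n htne]
      field_simp
    exact e2.trans e1.symm
  -- m n / D n with D n / n → 0
  have hk1 : (0:ℝ) < 1 - k' := by rw [hk'def]; linarith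
  have hDn : Tendsto (fun n : ℕ => ((lθ/8) * (n:ℝ) ^ k' * L n) / (n:ℝ)) atTop (𝓝 0) := by
    have hlo := (isLittleO_log_rpow_atTop hk1).tendsto_div_nhds_zero
    have h1 : Tendsto (fun n : ℕ => (lθ/8 / Real.log 2) *
        (Real.log (n:ℝ) / (n:ℝ) ^ (1 - k'))) atTop (𝓝 0) := by
      simpa using ((hlo.comp tendsto_natCast_atTop_atTop).const_mul (lθ/8 / Real.log 2))
    refine h1.congr' ?_
    filter_upwards [eventually_ge_atTop 1] with n hn
    have hn0 : (0:ℝ) < (n:ℝ) := by exact_mod_cast Nat.lt_of_lt_of_le Nat.zero_lt_one hn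
    have hlog2 : Real.log 2 ≠ 0 := ne_of_gt (Real.log_pos one_lt_two)
    have hsub : (n:ℝ) ^ ((1:ℝ) - k') = (n:ℝ) ^ (1:ℝ) / (n:ℝ) ^ k' := Real.rpow_sub hn0 1 k'
    have hkne : (n:ℝ) ^ k' ≠ 0 := ne_of_gt (Real.rpow_pos_of_pos hn0 _)
    rw [hsub, Real.rpow_one, hLdef]
    simp only [Real.logb]
    field_simp
  have hM3 : Tendsto (fun n : ℕ => m n / (n:ℝ)) atTop (𝓝 0) := by
    have := hMain.mul hDn
    have h1 : Tendsto (fun n : ℕ =>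
        (m n / ((lθ/8) * (n:ℝ) ^ k' * L n)) * (((lθ/8) * (n:ℝ) ^ k' * L n) / (n:ℝ)))
        atTop (𝓝 0) := by simpa using this
    refine h1.congr' ?_
    filter_upwards [hEv] with n hn
    obtain ⟨hn2, -, -, -, -, hL0⟩ := hn
    have hn0 : (0:ℝ) < (n:ℝ) := by exact_mod_cast Nat.lt_of_lt_of_le Nat.zero_lt_two hn2
    have hD0 : (lθ/8) * (n:ℝ) ^ k' * L n ≠ 0 :=
      ne_of_gt (mul_pos (mul_pos ha (Real.rpow_pos_of_pos hn0 _)) hL0)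
    rw [div_mul_div_comm, mul_comm (m n), mul_div_assoc, mul_div_assoc', mul_div_mul_left _ _ hD0]
  refine ⟨⟨by rw [hk'def]; linarith, by rw [hk'def]; linarith⟩, hMain, hM3, ?_⟩
  filter_upwards [hM3.eventually_lt_const zero_lt_one, eventually_ge_atTop 1] with n h1 hn
  have hn0 : (0:ℝ) < (n:ℝ) := by exact_mod_cast Nat.lt_of_lt_of_le Nat.zero_lt_one hn
  exact (div_lt_one hn0).mp h1
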